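/- Under the hypotheses of the previous existence theorem (noncritical approximate solution $\bar{x}$ with deformation constant $M$, accuracy $S$, second-derivative bound $K$ on the strip $I$, and $2M^2KS<1$), if in addition $|\int_0^{2\pi}\partial_x X(\bar{x}(t),t)\,dt|>2\pi/M$, then the periodic solution $x^*$ with $\|x^*-\bar{x}\|_\infty\le 2MS$ satisfies $\int_0^{2\pi}\partial_x X(x^*(t),t)\,dt\neq 0$, and its sign equals that of $\int_0^{2\pi}\partial_x X(\bar{x}(t),t)\,dt$; hence $x^*$ is hyperbolic. -/

import Mathlib

open Real Set

private lemma deriv_bound_aux {f g : ℝ → ℝ} {a b L C : ℝ} (hab : a < b)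
    (hf : ∀ u, HasDerivAt f (g u) u)
    (hg : ∀ p ∈ Icc a b, ∀ q ∈ Icc a b, |g p - g q| ≤ L)
    (hC : ∀ u ∈ Icc a b, |f u| ≤ C) :
    ∀ y ∈ Icc a b, |g y| ≤ L + 4 * C / (b - a) := by
  intro y hy
  have hw : 0 < b - a := sub_pos.mpr hab
  obtain ⟨p, q, hpq, hpI, hqI, hd⟩ :
      ∃ p q, p < q ∧ p ∈ Icc a b ∧ q ∈ Icc a b ∧ q - p = (b - a) / 2 := by
    by_cases h : y ≤ (a + b) / 2
    · exact ⟨y, y + (b - a) / 2, by linarith, hy,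
        ⟨by linarith [hy.1], by linarith⟩, by ring⟩
    · exact ⟨y - (b - a) / 2, y, by linarith,
        ⟨by linarith [hy.2], by linarith [hy.2]⟩, hy, by ring⟩
  obtain ⟨c, hc, hceq⟩ := exists_hasDerivAt_eq_slope f g hpq
    (fun u _ => (hf u).continuousAt.continuousWithinAt) (fun u _ => hf u)
  have hcI : c ∈ Icc a b := ⟨hpI.1.trans hc.1.le, hc.2.le.trans hqI.2⟩
  have hC0 : 0 ≤ C := (abs_nonneg _).trans (hC p hpI)
  have h1 : |g c| ≤ 4 * C / (b - a) := by
    rw [hceq, abs_div, abs_of_pos (by linarith : (0:ℝ) < q - p), hd]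
    have hnum : |f q - f p| ≤ 2 * C := by
      calc |f q - f p| ≤ |f q| + |f p| := abs_sub _ _
        _ ≤ 2 * C := by linarith [hC q hqI, hC p hpI]
    rw [div_le_div_iff₀ (by linarith) hw]
    nlinarith [hnum]
  have h2 : |g y - g c| ≤ L := hg y hy c hcI
  calc |g y| = |(g y - g c) + g c| := by ring_nf
    _ ≤ |g y - g c| + |g c| := abs_add_le _ _
    _ ≤ L + 4 * C / (b - a) := add_le_add h2 h1

private lemma measurable_partial_deriv {X Xx : ℝ → ℝ → ℝ}
    (hX1 : ∀ x t, HasDerivAt (fun y => X y t) (Xx x t) x)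
    (hXcont : Continuous fun p : ℝ × ℝ => X p.1 p.2) :
    Measurable fun p : ℝ × ℝ => Xx p.1 p.2 := by
  apply measurable_of_tendsto_metrizable
    (f := fun (n : ℕ) (p : ℝ × ℝ) => (X (p.1 + ((n : ℝ) + 1)⁻¹) p.2 - X p.1 p.2) * ((n : ℝ) + 1))
  · intro n
    exact (((hXcont.comp ((continuous_fst.add continuous_const).prodMk
      continuous_snd)).sub hXcont).mul continuous_const).measurable
  · rw [tendsto_pi_nhds]
    intro p
    have hd := hX1 p.1 p.2
    rw [hasDerivAt_iff_tendsto_slope] at hd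
    have hseq : Filter.Tendsto (fun n : ℕ => p.1 + ((n : ℝ) + 1)⁻¹)
        Filter.atTop (nhdsWithin p.1 {p.1}ᶜ) := by
      rw [tendsto_nhdsWithin_iff]
      constructor
      · have h0 : Filter.Tendsto (fun n : ℕ => ((n : ℝ) + 1)⁻¹) Filter.atTop (nhds 0) := by
          exact tendsto_one_div_add_atTop_nhds_zero_nat.congr fun n => one_div _
        simpa using tendsto_const_nhds.add h0
      · refine Filter.Eventually.of_forall fun n => ?_
        have hpos : (0 : ℝ) < ((n : ℝ) + 1)⁻¹ := by positivity
        simp only [Set.mem_compl_iff, Set.mem_singleton_iff]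
        exact (lt_add_of_pos_right _ hpos).ne'
    have hlim := hd.comp hseq
    refine hlim.congr fun n => ?_
    have hne : ((n : ℝ) + 1) ≠ 0 := by positivity
    simp only [Function.comp, slope_def_field]
    field_simp
    ring

/-- Hyperbolicity part of the main theorem: under the hypotheses of the existence
theorem, if moreover |∫₀^{2π} ∂ₓX(x̄(t),t) dt| > 2π/M, then every periodic solution x*
with ‖x*-x̄‖_∞ ≤ 2MS satisfies ∫₀^{2π} ∂ₓX(x*(t),t) dt ≠ 0 with the same sign as the
integral along x̄; hence x* is hyperbolic. -/
theorem hyperbolicity_periodic_solution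
    (Ω : Set ℝ) (hΩ : IsOpen Ω)
    (X Xx Xxx : ℝ → ℝ → ℝ)
    (hX1 : ∀ x t, HasDerivAt (fun y => X y t) (Xx x t) x)
    (hX2 : ∀ x t, HasDerivAt (fun y => Xx y t) (Xxx x t) x)
    (hXcont : Continuous fun p : ℝ × ℝ => X p.1 p.2)
    (hXper : ∀ x t, X x (t + 2*π) = X x t)
    (xb xb' : ℝ → ℝ) (hxb : ∀ t, HasDerivAt xb (xb' t) t)
    (hxb' : Continuous xb') (hxbper : ∀ t, xb (t + 2*π) = xb t)
    (hnc : (∫ t in (0:ℝ)..(2*π), Xx (xb t) t) ≠ 0)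
    (M : ℝ) (hM0 : 0 < M)
    (hM : ∀ b : ℝ → ℝ, Continuous b → (∀ t, b (t + 2*π) = b t) →
      ∀ y : ℝ → ℝ, (∀ t, HasDerivAt y (Xx (xb t) t * y t + b t) t) →
        (∀ t, y (t + 2*π) = y t) →
        ∀ t, |y t| ≤ M * Real.sqrt ((1/(2*π)) * ∫ s in (0:ℝ)..(2*π), (b s)^2))
    (S : ℝ)
    (hS : S = Real.sqrt ((1/(2*π)) * ∫ t in (0:ℝ)..(2*π), (xb' t - X (xb t) t)^2))
    (K : ℝ)
    (hI : Set.Icc (sInf (Set.range xb) - 2*M*S) (sSup (Set.range xb) + 2*M*S) ⊆ Ω)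
    (hK : ∀ x ∈ Set.Icc (sInf (Set.range xb) - 2*M*S) (sSup (Set.range xb) + 2*M*S),
      ∀ t ∈ Set.Icc (0:ℝ) (2*π), |Xxx x t| ≤ K)
    (hcontr : 2*M^2*K*S < 1)
    (hbig : |∫ t in (0:ℝ)..(2*π), Xx (xb t) t| > 2*π/M) :
    ∀ x : ℝ → ℝ, (∀ t, HasDerivAt x (X (x t) t) t) → (∀ t, x (t + 2*π) = x t) →
      (∀ t, |x t - xb t| ≤ 2*M*S) →
      (∫ t in (0:ℝ)..(2*π), Xx (x t) t) ≠ 0 ∧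
      0 < (∫ t in (0:ℝ)..(2*π), Xx (xb t) t) * (∫ t in (0:ℝ)..(2*π), Xx (x t) t) := by
  intro x hx hxper hxclose
  have twopi_pos : (0:ℝ) < 2*π := by positivity
  have hS0 : 0 ≤ S := hS ▸ Real.sqrt_nonneg _
  have hr0 : 0 ≤ 2*M*S := by positivity
  have hxbc : Continuous xb := by
    refine continuous_iff_continuousAt.mpr fun t => (hxb t).continuousAt
  have hxc : Continuous x := by
    refine continuous_iff_continuousAt.mpr fun t => (hx t).continuousAt
  set A := sInf (Set.range xb) with hA
  set B := sSup (Set.range xb) with hB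
  have hperiodic : Function.Periodic xb (2*π) := hxbper
  have hrange : Set.range xb = xb '' Set.Icc 0 (0 + 2*π) :=
    (hperiodic.image_Icc twopi_pos 0).symm
  have hcomp : IsCompact (Set.range xb) := by
    rw [hrange]; exact (isCompact_Icc.image hxbc)
  have hAt : ∀ t, A ≤ xb t := fun t => csInf_le hcomp.bddBelow ⟨t, rfl⟩
  have hBt : ∀ t, xb t ≤ B := fun t => le_csSup hcomp.bddAbove ⟨t, rfl⟩
  set lo := A - 2*M*S with hlo
  set hi := B + 2*M*S with hhi
  have hxbJ : ∀ t, xb t ∈ Set.Icc lo hi := fun t =>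
    ⟨by have := hAt t; simp only [hlo]; linarith, by have := hBt t; simp only [hhi]; linarith⟩
  have hxJ : ∀ t, x t ∈ Set.Icc lo hi := by
    intro t
    have h1 := abs_le.mp (hxclose t)
    exact ⟨by have := hAt t; simp only [hlo]; linarith [h1.1],
           by have := hBt t; simp only [hhi]; linarith [h1.2]⟩
  have h0mem : (0:ℝ) ∈ Set.Icc (0:ℝ) (2*π) := ⟨le_refl 0, twopi_pos.le⟩
  have hK0 : 0 ≤ K := (abs_nonneg _).trans (hK (xb 0) (hxbJ 0) 0 h0mem)
  -- Lipschitz bound for Xx in x on the strip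
  have hlip : ∀ t ∈ Set.Icc (0:ℝ) (2*π), ∀ a ∈ Set.Icc lo hi, ∀ b ∈ Set.Icc lo hi,
      |Xx a t - Xx b t| ≤ K * |a - b| := by
    intro t ht a ha b hb
    have := Convex.norm_image_sub_le_of_norm_hasDerivWithin_le
      (f := fun y => Xx y t) (f' := fun y => Xxx y t) (s := Set.Icc lo hi)
      (fun y hy => (hX2 y t).hasDerivWithinAt) (fun y hy => by
        simpa [Real.norm_eq_abs] using hK y hy t ht) (convex_Icc _ _) hb ha
    simpa [Real.norm_eq_abs] using this
  -- pointwise bound on the difference of integrands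
  have hdiff : ∀ t ∈ Set.uIoc (0:ℝ) (2*π),
      ‖Xx (x t) t - Xx (xb t) t‖ ≤ K * (2*M*S) := by
    intro t ht
    rw [Set.uIoc_of_le twopi_pos.le] at ht
    have ht' : t ∈ Set.Icc (0:ℝ) (2*π) := ⟨ht.1.le, ht.2⟩
    calc ‖Xx (x t) t - Xx (xb t) t‖ = |Xx (x t) t - Xx (xb t) t| := rfl
      _ ≤ K * |x t - xb t| := hlip t ht' _ (hxJ t) _ (hxbJ t)
      _ ≤ K * (2*M*S) := mul_le_mul_of_nonneg_left (hxclose t) hK0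
  set a := ∫ t in (0:ℝ)..(2*π), Xx (xb t) t with ha
  set b := ∫ t in (0:ℝ)..(2*π), Xx (x t) t with hb
  -- degenerate strip: x = xb
  rcases eq_or_lt_of_le (show lo ≤ hi by
      have := hAt 0; have := hBt 0; simp only [hlo, hhi]; linarith) with hdeg | hlohi
  · have hxeq : ∀ t, x t = xb t := by
      intro t
      have h1 := hxJ t
      have h2 := hxbJ t
      rw [← hdeg] at h1 h2
      have : 2*M*S = 0 := by
        have := hAt 0; have := hBt 0
        simp only [hlo, hhi] at hdeg; linarith
      have := abs_le.mp (hxclose t)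
      rw [‹2*M*S = 0›] at this
      linarith [this.1, this.2]
    have hba : b = a := by
      simp only [hb, ha]
      congr 1
      funext t
      rw [hxeq t]
    rw [hba]
    exact ⟨hnc, mul_self_pos.mpr hnc⟩
  -- nondegenerate strip
  · -- bound for |X| on the compact strip
    obtain ⟨C, hC⟩ := (isCompact_Icc.prod isCompact_Icc).exists_bound_of_continuousOn
      (s := Set.Icc lo hi ×ˢ Set.Icc (0:ℝ) (2*π)) hXcont.continuousOn
    -- uniform bound for |Xx| on the strip
    have hXxb : ∀ t ∈ Set.Icc (0:ℝ) (2*π), ∀ y ∈ Set.Icc lo hi,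
        |Xx y t| ≤ K * (hi - lo) + 4 * C / (hi - lo) := by
      intro t ht
      refine deriv_bound_aux hlohi (fun u => hX1 u t) ?_ ?_
      · intro p hp q hq
        refine (hlip t ht p hp q hq).trans (mul_le_mul_of_nonneg_left ?_ hK0)
        rw [abs_sub_le_iff]
        constructor <;> linarith [hp.1, hp.2, hq.1, hq.2]
      · intro u hu
        simpa [Real.norm_eq_abs] using hC (u, t) ⟨hu, ht⟩
    -- measurability and integrability
    have hmeas := measurable_partial_deriv hX1 hXcont
    have hint : ∀ y : ℝ → ℝ, Continuous y → (∀ t, y t ∈ Set.Icc lo hi) →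
        IntervalIntegrable (fun t => Xx (y t) t) MeasureTheory.volume 0 (2*π) := by
      intro y hyc hyJ
      rw [intervalIntegrable_iff_integrableOn_Ioc_of_le twopi_pos.le]
      refine MeasureTheory.Integrable.mono'
        (MeasureTheory.integrable_const (K * (hi - lo) + 4 * C / (hi - lo)))
        ((hmeas.comp (hyc.prodMk continuous_id).measurable).aestronglyMeasurable) ?_
      filter_upwards [MeasureTheory.ae_restrict_mem measurableSet_Ioc] with t ht
      exact hXxb t ⟨ht.1.le, ht.2⟩ (y t) (hyJ t)
    have hI1 := hint xb hxbc hxbJ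
    have hI2 := hint x hxc hxJ
    have hsub : (∫ t in (0:ℝ)..(2*π), (Xx (x t) t - Xx (xb t) t)) = b - a :=
      intervalIntegral.integral_sub hI2 hI1
    have hbd : |b - a| ≤ K * (2*M*S) * (2*π) := by
      have := intervalIntegral.norm_integral_le_of_norm_le_const hdiff
      rw [hsub] at this
      simpa [abs_of_pos twopi_pos, Real.norm_eq_abs] using this
    -- arithmetic conclusion
    have h1 : 2*π < |a| * M := (div_lt_iff₀ hM0).mp hbig
    have habs : |b - a| < |a| := by
      have e1 : M * |b - a| ≤ M * (K * (2*M*S) * (2*π)) :=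
        mul_le_mul_of_nonneg_left hbd hM0.le
      have e2 : (2*π) * (2*M^2*K*S) < (2*π) * 1 :=
        mul_lt_mul_of_pos_left hcontr twopi_pos
      nlinarith [e1, e2, h1, hM0]
    have hpos : 0 < a * b := by
      nlinarith [neg_abs_le (a * (b - a)), abs_mul a (b - a), sq_abs a,
        mul_lt_mul_of_pos_left habs (abs_pos.mpr hnc)]
    refine ⟨fun h0 => by rw [h0, mul_zero] at hpos; exact lt_irrefl 0 hpos, hpos⟩
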